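/- There exists no element of the lower BL spectrum of rotations strictly between 3 − √3 and (5 − √5)/2; that is, for every irrational α with bounded partial quotients, liminf_{k→∞}(1 + tₖvₖ) is either ≤ 3 − √3 or equal to (5 − √5)/2, where tₖ = [0; b_{k+1}, ...], vₖ = [0; bₖ, ..., b₁]. -/

import Mathlib

open Filter

noncomputable def cfFin : List ℕ → ℝ
  | [] => 0
  | a :: l => 1 / ((a : ℝ) + cfFin l)

noncomputable def cfInf (a : ℕ → ℕ) : ℝ :=
  limUnder Filter.atTop (fun n => cfFin (List.ofFn (fun i : Fin n => a i)))

/-- forward tail: `cfT a k = [0; b_{k+1}, b_{k+2}, …]` where `bᵢ = a (i-1)`. -/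
noncomputable def cfT (a : ℕ → ℕ) (k : ℕ) : ℝ := cfInf (fun n => a (n + k))

/-- backward tail: `cfV a k = [0; b_k, …, b_1]`. -/
noncomputable def cfV (a : ℕ → ℕ) (k : ℕ) : ℝ := cfFin ((List.range k).reverse.map a)

def cfQ (a : ℕ → ℕ) : ℕ → ℕ
  | 0 => 1
  | 1 => a 0
  | (k + 2) => a (k + 1) * cfQ a (k + 1) + cfQ a k

def cfP (a : ℕ → ℕ) : ℕ → ℕ
  | 0 => 0
  | 1 => 1
  | (k + 2) => a (k + 1) * cfP a (k + 1) + cfP a k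

/-- finite continued fraction with real tail x. -/
noncomputable def cfFinX : List ℕ → ℝ → ℝ
  | [], x => x
  | a :: l, x => 1 / ((a : ℝ) + cfFinX l x)

lemma cfFinX_zero (l : List ℕ) : cfFinX l 0 = cfFin l := by
  induction l with
  | nil => simp [cfFinX, cfFin]
  | cons a l ih => simp [cfFinX, cfFin, ih]

lemma cfFinX_append (l : List ℕ) (b : ℕ) (x : ℝ) :
    cfFinX (l ++ [b]) x = cfFinX l (1 / ((b : ℝ) + x)) := by
  induction l with
  | nil => simp [cfFinX]
  | cons a l ih => simp [cfFinX, ih]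

lemma cfFin_mem_Icc (l : List ℕ) (hl : ∀ x ∈ l, 1 ≤ x) : cfFin l ∈ Set.Icc (0:ℝ) 1 := by
  induction l with
  | nil => simp [cfFin]
  | cons a l ih =>
    have ha : (1:ℝ) ≤ (a:ℝ) := by exact_mod_cast hl a (by simp)
    have ih' := ih (fun x hx => hl x (by simp [hx]))
    have h1 : (0:ℝ) < (a:ℝ) + cfFin l := by nlinarith [ih'.1, ih'.2]
    constructor
    · simp only [cfFin]; positivity
    · simp only [cfFin]
      rw [div_le_one h1]; nlinarith [ih'.1]

lemma cfQ_pos (a : ℕ → ℕ) (ha : ∀ n, 1 ≤ a n) : ∀ n, 1 ≤ cfQ a n := by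
  intro n
  induction n using Nat.strong_induction_on with
  | _ n ih =>
    match n with
    | 0 => simp [cfQ]
    | 1 => simpa [cfQ] using ha 0
    | (k+2) =>
      have h1 := ih (k+1) (by omega)
      have h2 := ih k (by omega)
      have := ha (k+1)
      simp only [cfQ]; nlinarith

lemma cfQ_mono (a : ℕ → ℕ) (ha : ∀ n, 1 ≤ a n) : ∀ n, cfQ a n ≤ cfQ a (n+1) := by
  intro n
  match n with
  | 0 => simpa [cfQ] using ha 0
  | (k+1) =>
    have h1 := cfQ_pos a ha (k+1)
    have h2 := cfQ_pos a ha k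
    have := ha (k+1)
    show cfQ a (k+1) ≤ cfQ a (k+2)
    simp only [cfQ]; nlinarith

/-- determinant identity over ℝ -/
lemma cf_det (a : ℕ → ℕ) : ∀ n, (cfP a (n+1) : ℝ) * cfQ a n - (cfP a n : ℝ) * cfQ a (n+1) = (-1)^n := by
  intro n
  induction n with
  | zero => simp [cfP, cfQ]
  | succ k ih =>
    show (cfP a (k+2) : ℝ) * cfQ a (k+1) - (cfP a (k+1) : ℝ) * cfQ a (k+2) = (-1)^(k+1)
    simp only [cfP, cfQ]
    push_cast
    ring_nf
    ring_nf at ih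
    nlinarith [ih]

/-- the key formula -/
lemma cfFinX_eq (a : ℕ → ℕ) (ha : ∀ n, 1 ≤ a n) : ∀ n, ∀ x : ℝ, 0 ≤ x →
    cfFinX (List.ofFn (fun i : Fin (n+1) => a i)) x
      = ((cfP a (n+1) : ℝ) + x * cfP a n) / ((cfQ a (n+1) : ℝ) + x * cfQ a n) := by
  intro n
  induction n with
  | zero =>
    intro x hx
    simp [cfFinX, cfP, cfQ, List.ofFn_succ]
  | succ k ih =>
    intro x hx
    have hlist : (List.ofFn (fun i : Fin (k+2) => a i))
        = (List.ofFn (fun i : Fin (k+1) => a i)) ++ [a (k+1)] := by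
      rw [List.ofFn_succ']
      simp [Fin.last, List.concat_eq_append]
    rw [hlist, cfFinX_append]
    have hbx : (0:ℝ) < (a (k+1) : ℝ) + x := by
      have := ha (k+1); positivity
    rw [ih (1/((a (k+1):ℝ) + x)) (by positivity)]
    have hq1 : (1:ℝ) ≤ cfQ a (k+1) := by exact_mod_cast cfQ_pos a ha (k+1)
    have hq0 : (1:ℝ) ≤ cfQ a k := by exact_mod_cast cfQ_pos a ha k
    have hden : (0:ℝ) < (cfQ a (k+1) : ℝ) + 1/((a (k+1):ℝ) + x) * cfQ a k := by
      positivity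
    have hden2 : (0:ℝ) < (cfQ a (k+2) : ℝ) + x * cfQ a (k+1) := by
      have : (1:ℝ) ≤ cfQ a (k+2) := by exact_mod_cast cfQ_pos a ha (k+2)
      nlinarith
    rw [div_eq_div_iff hden.ne' hden2.ne']
    simp only [cfP, cfQ]
    push_cast
    field_simp
    ring

noncomputable def cfConv (a : ℕ → ℕ) (n : ℕ) : ℝ := cfFin (List.ofFn (fun i : Fin n => a i))

lemma cfConv_eq (a : ℕ → ℕ) (ha : ∀ n, 1 ≤ a n) (n : ℕ) :
    cfConv a (n+1) = (cfP a (n+1) : ℝ) / (cfQ a (n+1) : ℝ) := by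
  have := cfFinX_eq a ha n 0 le_rfl
  rw [cfFinX_zero] at this
  simpa [cfConv] using this

lemma cfQ_prod (a : ℕ → ℕ) (ha : ∀ n, 1 ≤ a n) : ∀ n, 2^n ≤ cfQ a n * cfQ a (n+1) := by
  intro n
  induction n with
  | zero => simpa [cfQ] using ha 0
  | succ k ih =>
    have h1 := cfQ_mono a ha k
    have h2 := cfQ_pos a ha k
    have h3 := cfQ_pos a ha (k+1)
    have h4 := ha (k+1)
    show 2^(k+1) ≤ cfQ a (k+1) * cfQ a (k+2)
    simp only [cfQ]
    calc 2^(k+1) = 2 * 2^k := by ring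
    _ ≤ 2 * (cfQ a k * cfQ a (k+1)) := by omega
    _ ≤ cfQ a (k+1) * (a (k+1) * cfQ a (k+1) + cfQ a k) := by
        have : cfQ a k * cfQ a (k+1) ≤ cfQ a (k+1) * cfQ a (k+1) := Nat.mul_le_mul_right _ h1
        have h5 : cfQ a (k+1) * cfQ a (k+1) ≤ a (k+1) * (cfQ a (k+1) * cfQ a (k+1)) := Nat.le_mul_of_pos_left _ h4
        nlinarith

lemma cfConv_dist (a : ℕ → ℕ) (ha : ∀ n, 1 ≤ a n) (n : ℕ) :
    dist (cfConv a n) (cfConv a (n+1)) ≤ 1 * (1/2)^n := by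
  match n with
  | 0 =>
    have h := cfFin_mem_Icc (List.ofFn (fun i : Fin 1 => a i))
      (by intro x hx; rw [List.mem_ofFn] at hx; obtain ⟨i, rfl⟩ := hx; exact ha i)
    have h0 : cfConv a 0 = 0 := by simp [cfConv, cfFin]
    rw [Real.dist_eq, h0]
    simp only [cfConv] at h ⊢
    rw [abs_sub_comm, abs_of_nonneg (by linarith [h.1])]
    simpa using h.2
  | (m+1) =>
    rw [cfConv_eq a ha m, cfConv_eq a ha (m+1)]
    have hq1 : (1:ℝ) ≤ cfQ a (m+1) := by exact_mod_cast cfQ_pos a ha (m+1)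
    have hq2 : (1:ℝ) ≤ cfQ a (m+2) := by exact_mod_cast cfQ_pos a ha (m+2)
    have hdet := cf_det a (m+1)
    have hprod : (2:ℝ)^(m+1) ≤ (cfQ a (m+1) : ℝ) * cfQ a (m+2) := by
      exact_mod_cast cfQ_prod a ha (m+1)
    rw [Real.dist_eq, div_sub_div _ _ (by linarith) (by linarith), abs_div]
    have hnum : |(cfP a (m+1) : ℝ) * cfQ a (m+2) - (cfQ a (m+1):ℝ) * cfP a (m+2)| = 1 := by
      have : (cfP a (m+1) : ℝ) * cfQ a (m+2) - (cfQ a (m+1):ℝ) * cfP a (m+2)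
          = -((-1:ℝ)^(m+1)) := by linarith [hdet]
      rw [this, abs_neg]
      simp [abs_pow]
    rw [hnum, abs_of_pos (by nlinarith : (0:ℝ) < (cfQ a (m+1) : ℝ) * cfQ a (m+2))]
    rw [one_mul, div_pow, one_pow, one_div, one_div, inv_le_inv₀ (by nlinarith) (by positivity)]
    calc ((2:ℝ)^(m+1)) ≤ (cfQ a (m+1) : ℝ) * cfQ a (m+2) := hprod
    _ = _ := by ring_nf

lemma cfInf_tendsto (a : ℕ → ℕ) (ha : ∀ n, 1 ≤ a n) :
    Tendsto (cfConv a) atTop (nhds (cfInf a)) := by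
  have hc : CauchySeq (cfConv a) :=
    cauchySeq_of_le_geometric (1/2) 1 (by norm_num) (cfConv_dist a ha)
  obtain ⟨x, hx⟩ := cauchySeq_tendsto_of_complete hc
  have : cfInf a = x := hx.limUnder_eq
  rwa [this]

lemma cfInf_mem (a : ℕ → ℕ) (ha : ∀ n, 1 ≤ a n) : cfInf a ∈ Set.Icc (0:ℝ) 1 := by
  have ht := cfInf_tendsto a ha
  have hmem : ∀ n, cfConv a n ∈ Set.Icc (0:ℝ) 1 := by
    intro n
    exact cfFin_mem_Icc _ (by intro x hx; rw [List.mem_ofFn] at hx; obtain ⟨i, rfl⟩ := hx; exact ha i)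
  constructor
  · exact ge_of_tendsto ht (Eventually.of_forall fun n => (hmem n).1)
  · exact le_of_tendsto ht (Eventually.of_forall fun n => (hmem n).2)

lemma cfT_mem (a : ℕ → ℕ) (ha : ∀ n, 1 ≤ a n) (k : ℕ) : cfT a k ∈ Set.Icc (0:ℝ) 1 :=
  cfInf_mem _ (fun n => ha (n+k))

lemma cfT_rec (a : ℕ → ℕ) (ha : ∀ n, 1 ≤ a n) (k : ℕ) :
    cfT a k = 1 / ((a k : ℝ) + cfT a (k+1)) := by
  set b : ℕ → ℕ := fun n => a (n + k) with hb
  set b' : ℕ → ℕ := fun n => a (n + (k+1)) with hb'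
  have h1 : Tendsto (fun n => cfConv b (n+1)) atTop (nhds (cfT a k)) :=
    (cfInf_tendsto b (fun n => ha (n+k))).comp (tendsto_add_atTop_nat 1)
  have h2 : Tendsto (cfConv b') atTop (nhds (cfT a (k+1))) :=
    cfInf_tendsto b' (fun n => ha (n+(k+1)))
  have hkey : ∀ n, cfConv b (n+1) = 1 / ((a k : ℝ) + cfConv b' n) := by
    intro n
    have hl : (List.ofFn (fun i : Fin (n+1) => b i)) = b 0 :: List.ofFn (fun i : Fin n => b' i) := by
      rw [List.ofFn_succ]
      have : (fun i : Fin n => b i.succ) = (fun i : Fin n => b' i) := by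
        funext i
        show a (i.val + 1 + k) = a (i.val + (k+1))
        congr 1
        omega
      rw [this]
      rfl
    simp only [cfConv, hl, cfFin]
    norm_num [hb]
  have hne : ((a k : ℝ) + cfT a (k+1)) ≠ 0 := by
    have := (cfT_mem a ha (k+1)).1
    have h := ha k
    have : (1:ℝ) ≤ (a k : ℝ) := by exact_mod_cast h
    nlinarith [(cfT_mem a ha (k+1)).1]
  have h3 : Tendsto (fun n => 1 / ((a k : ℝ) + cfConv b' n)) atTop
      (nhds (1 / ((a k : ℝ) + cfT a (k+1)))) :=
    tendsto_const_nhds.div (tendsto_const_nhds.add h2) hne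
  have h4 : Tendsto (fun n => cfConv b (n+1)) atTop (nhds (1 / ((a k : ℝ) + cfT a (k+1)))) := by
    simpa only [hkey] using h3
  exact tendsto_nhds_unique h1 h4

lemma cfT_pos (a : ℕ → ℕ) (ha : ∀ n, 1 ≤ a n) (k : ℕ) : 0 < cfT a k := by
  rw [cfT_rec a ha k]
  have h1 : (1:ℝ) ≤ (a k : ℝ) := by exact_mod_cast ha k
  have h2 := (cfT_mem a ha (k+1)).1
  have h3 : (0:ℝ) < (a k : ℝ) + cfT a (k+1) := by linarith
  exact div_pos one_pos h3

lemma cfT_lt_one (a : ℕ → ℕ) (ha : ∀ n, 1 ≤ a n) (k : ℕ) : cfT a k < 1 := by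
  rw [cfT_rec a ha k]
  have h1 : (1:ℝ) ≤ (a k : ℝ) := by exact_mod_cast ha k
  have h2 := cfT_pos a ha (k+1)
  rw [div_lt_one (by linarith)]
  linarith

lemma cfV_zero (a : ℕ → ℕ) : cfV a 0 = 0 := by simp [cfV, cfFin]

lemma cfV_rec (a : ℕ → ℕ) (k : ℕ) : cfV a (k+1) = 1 / ((a k : ℝ) + cfV a k) := by
  simp only [cfV, List.range_succ, List.reverse_append, List.reverse_cons, List.reverse_nil,
    List.nil_append, List.cons_append, List.map_cons, cfFin]

lemma cfV_mem (a : ℕ → ℕ) (ha : ∀ n, 1 ≤ a n) (k : ℕ) : cfV a k ∈ Set.Icc (0:ℝ) 1 := by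
  induction k with
  | zero => simp [cfV_zero]
  | succ m ih =>
    rw [cfV_rec]
    have h1 : (1:ℝ) ≤ (a m : ℝ) := by exact_mod_cast ha m
    have h2 : (0:ℝ) < (a m : ℝ) + cfV a m := by nlinarith [ih.1]
    constructor
    · exact le_of_lt (div_pos one_pos h2)
    · rw [div_le_one h2]; nlinarith [ih.1]

lemma sqrt5_facts : (2:ℝ) < Real.sqrt 5 ∧ Real.sqrt 5 < 3 ∧ Real.sqrt 5 ^ 2 = 5 := by
  have h : Real.sqrt 5 ^ 2 = 5 := Real.sq_sqrt (by norm_num)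
  have hpos : 0 ≤ Real.sqrt 5 := Real.sqrt_nonneg 5
  refine ⟨?_, ?_, h⟩ <;> nlinarith

lemma case1 (a : ℕ → ℕ) (ha : ∀ n, 1 ≤ a n) (N : ℕ) (hN : ∀ k ≥ N, a k = 1) :
    Filter.liminf (fun k => 1 + cfT a k * cfV a k) Filter.atTop = (5 - Real.sqrt 5) / 2 := by
  obtain ⟨hs2, hs3, hs5⟩ := sqrt5_facts
  set g : ℝ := (Real.sqrt 5 - 1)/2 with hgdef
  have hg0 : (1:ℝ)/2 < g := by rw [hgdef]; linarith
  have hg1 : g < 1 := by rw [hgdef]; linarith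
  have hgfix : g = 1 / (1 + g) := by
    rw [hgdef]; rw [eq_div_iff (by linarith)]; nlinarith
  -- contraction bound
  have contract : ∀ x y : ℝ, 0 ≤ x → (y = 1/(1+x)) → |y - g| ≤ (2/3) * |x - g| := by
    intro x y hx hy
    have hd : (0:ℝ) < 1 + x := by linarith
    have hgg : g * (1 + g) = 1 := by rw [hgdef]; nlinarith
    have heq : y - g = (g - x) / ((1+x)*(1+g)) := by
      rw [eq_div_iff (by nlinarith : ((1+x)*(1+g)) ≠ 0), hy]
      field_simp
      linear_combination (-(1+x)^2) * hgg + ((x + x^2)/4) * hs5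
    rw [heq, abs_div, abs_of_pos (by nlinarith : (0:ℝ) < (1+x)*(1+g))]
    rw [div_le_iff₀ (by nlinarith)]
    have h1 : |g - x| = |x - g| := abs_sub_comm g x
    rw [h1]
    have h2 : (3:ℝ)/2 ≤ (1+x)*(1+g) := by nlinarith
    nlinarith [abs_nonneg (x - g)]
  -- T is constantly g on [N, ∞)
  have hT : ∀ k ≥ N, cfT a k = g := by
    have key : ∀ m : ℕ, ∀ k ≥ N, |cfT a k - g| ≤ (2/3)^m := by
      intro m
      induction m with
      | zero =>
        intro k hk
        have h1 := (cfT_mem a ha k).1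
        have h2 := (cfT_mem a ha k).2
        rw [pow_zero, abs_le]
        constructor <;> nlinarith
      | succ p ih =>
        intro k hk
        have hrec := cfT_rec a ha k
        rw [hN k hk] at hrec
        push_cast at hrec
        have := contract (cfT a (k+1)) (cfT a k) (cfT_mem a ha (k+1)).1 hrec
        have hih := ih (k+1) (by omega)
        calc |cfT a k - g| ≤ (2/3) * |cfT a (k+1) - g| := this
        _ ≤ (2/3) * (2/3)^p := by nlinarith [abs_nonneg (cfT a (k+1) - g)]
        _ = (2/3)^(p+1) := by ring
    intro k hk
    by_contra hne
    have hpos : 0 < |cfT a k - g| := abs_pos.mpr (sub_ne_zero.mpr hne)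
    obtain ⟨m, hm⟩ := exists_pow_lt_of_lt_one hpos (by norm_num : (2:ℝ)/3 < 1)
    exact absurd (key m k hk) (not_le.mpr hm)
  -- V tends to g
  have hV : Tendsto (fun k => cfV a k) atTop (nhds g) := by
    have key : ∀ m : ℕ, |cfV a (N + m) - g| ≤ (2/3)^m := by
      intro m
      induction m with
      | zero =>
        have h1 := (cfV_mem a ha N).1
        have h2 := (cfV_mem a ha N).2
        rw [Nat.add_zero, pow_zero, abs_le]
        constructor <;> nlinarith
      | succ p ih =>
        have hrec := cfV_rec a (N + p)
        rw [hN (N+p) (by omega)] at hrec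
        push_cast at hrec
        have hNp : N + (p+1) = (N + p) + 1 := by omega
        rw [hNp]
        have := contract (cfV a (N+p)) (cfV a (N+p+1)) (cfV_mem a ha (N+p)).1 hrec
        calc |cfV a (N+p+1) - g| ≤ (2/3) * |cfV a (N+p) - g| := this
        _ ≤ (2/3) * (2/3)^p := by nlinarith [abs_nonneg (cfV a (N+p) - g)]
        _ = (2/3)^(p+1) := by ring
    have h0 : Tendsto (fun m : ℕ => ((2:ℝ)/3)^m) atTop (nhds 0) :=
      tendsto_pow_atTop_nhds_zero_of_lt_one (by norm_num) (by norm_num)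
    have h1 : Tendsto (fun m => cfV a (N + m)) atTop (nhds g) := by
      rw [tendsto_iff_dist_tendsto_zero]
      apply squeeze_zero (fun m => dist_nonneg) _ h0
      intro m
      rw [Real.dist_eq]
      exact key m
    have h2 : Tendsto (fun m => cfV a (m + N)) atTop (nhds g) := by
      simpa [Nat.add_comm] using h1
    exact (tendsto_add_atTop_iff_nat N).mp h2
  -- conclude
  have hlim : Tendsto (fun k => 1 + cfT a k * cfV a k) atTop (nhds (1 + g * g)) := by
    have h1 : Tendsto (fun k => 1 + g * cfV a k) atTop (nhds (1 + g * g)) :=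
      tendsto_const_nhds.add (tendsto_const_nhds.mul hV)
    apply h1.congr'
    filter_upwards [eventually_ge_atTop N] with k hk
    rw [hT k hk]
  have : 1 + g * g = (5 - Real.sqrt 5)/2 := by
    rw [hgdef]; nlinarith
  rw [← this]
  exact hlim.liminf_eq

lemma sqrt3_facts : (1.7308:ℝ) < Real.sqrt 3 ∧ Real.sqrt 3 < 1.7321 ∧ Real.sqrt 3 ^ 2 = 3 := by
  have h : Real.sqrt 3 ^ 2 = 3 := Real.sq_sqrt (by norm_num)
  have hpos : 0 ≤ Real.sqrt 3 := Real.sqrt_nonneg 3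
  refine ⟨?_, ?_, h⟩ <;> nlinarith

set_option maxHeartbeats 2000000 in
lemma case2 (a : ℕ → ℕ) (ha : ∀ n, 1 ≤ a n) (h2 : ∀ N, ∃ k ≥ N, 2 ≤ a k) :
    Filter.liminf (fun k => 1 + cfT a k * cfV a k) Filter.atTop ≤ 3 - Real.sqrt 3 := by
  obtain ⟨hs1, hs2, hs3⟩ := sqrt3_facts
  set s : ℝ := Real.sqrt 3 with hsdef
  set T : ℕ → ℝ := cfT a with hTdef
  set V : ℕ → ℝ := cfV a with hVdef
  have hT0 : ∀ k, 0 < T k := cfT_pos a ha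
  have hT1 : ∀ k, T k < 1 := cfT_lt_one a ha
  have hV0 : ∀ k, 0 ≤ V k := fun k => (cfV_mem a ha k).1
  have hV1 : ∀ k, V k ≤ 1 := fun k => (cfV_mem a ha k).2
  have haR : ∀ k, (1:ℝ) ≤ (a k : ℝ) := fun k => by exact_mod_cast ha k
  have hTmul : ∀ k, T k * ((a k : ℝ) + T (k+1)) = 1 := by
    intro k
    rw [hTdef, cfT_rec a ha k]
    have : (0:ℝ) < (a k : ℝ) + cfT a (k+1) := by
      have := (cfT_mem a ha (k+1)).1; have := haR k; linarith
    field_simp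
  have hVmul : ∀ k, V (k+1) * ((a k : ℝ) + V k) = 1 := by
    intro k
    rw [hVdef, cfV_rec a k]
    have : (0:ℝ) < (a k : ℝ) + cfV a k := by
      have := (cfV_mem a ha k).1; have := haR k; linarith
    field_simp
  apply le_of_forall_pos_le_add
  intro ε hε
  set ε' : ℝ := min ε (1/100) with hε'def
  have hε'pos : 0 < ε' := lt_min hε (by norm_num)
  have hε'le : ε' ≤ 1/100 := min_le_right _ _
  set u : ℝ := (2 - s) + ε' with hudef
  have hu1 : 2 - s < u := by rw [hudef]; linarith
  have hu2 : u ≤ 2 - s + 1/100 := by rw [hudef]; linarith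
  have hu3 : 1/4 < u := by rw [hudef]; linarith
  have hu4 : u < 28/100 := by linarith
  -- main claim : frequently T k * V k < u
  have freq : ∃ᶠ k in atTop, T k * V k < u := by
    by_contra hcon
    rw [not_frequently] at hcon
    obtain ⟨N, hN⟩ := eventually_atTop.1 hcon
    have hP : ∀ k ≥ N, u ≤ T k * V k := by
      intro k hk
      have := hN k hk
      simpa [not_lt] using this
    -- the basic lower bound from two consecutive indices
    have LB : ∀ k, N ≤ k → 2 ≤ a k → 2*u/(1-u) ≤ T (k+1) := by
      intro k hk hak
      have hak' : (2:ℝ) ≤ (a k : ℝ) := by exact_mod_cast hak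
      have hP1 := hP k hk
      have hP2 := hP (k+1) (by omega)
      set x := T (k+1) with hx
      set y := V k with hy
      have e1 : T k * ((a k : ℝ) + x) = 1 := hTmul k
      have e2 : V (k+1) * ((a k : ℝ) + y) = 1 := hVmul k
      have hdx : (0:ℝ) < (a k : ℝ) + x := by have := hT0 (k+1); linarith
      have hdy : (0:ℝ) < (a k : ℝ) + y := by have := hV0 k; linarith
      -- y ≥ u * (2 + x)
      have hy1 : u * (2 + x) ≤ y := by
        have hTk : T k = 1 / ((a k : ℝ) + x) := by
          field_simp at e1 ⊢; linarith [e1]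
        rw [hTk] at hP1
        rw [div_mul_eq_mul_div, le_div_iff₀ hdx] at hP1
        nlinarith [hT0 (k+1)]
      -- x ≥ u * (2 + y)
      have hx1 : u * (2 + y) ≤ x := by
        have hVk : V (k+1) = 1 / ((a k : ℝ) + y) := by
          field_simp at e2 ⊢; linarith [e2]
        rw [hVk] at hP2
        rw [mul_one_div, le_div_iff₀ hdy] at hP2
        nlinarith [hV0 k]
      -- combine
      rw [div_le_iff₀ (by linarith : (0:ℝ) < 1 - u)]
      nlinarith [hx1, hy1, hu3, hu4]
    obtain ⟨k₀, hk₀N, hk₀2⟩ := h2 N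
    set δ : ℝ := 2*u/(1-u) - (s-1) with hδdef
    have hδpos : 0 < δ := by
      rw [hδdef, sub_pos, lt_div_iff₀ (by linarith : (0:ℝ) < 1 - u)]
      nlinarith
    have main : ∀ j, 2 ≤ a (k₀ + 2*j) ∧ (s-1) + 13^j * δ ≤ T (k₀ + 2*j + 1) := by
      intro j
      induction j with
      | zero =>
        refine ⟨by simpa using hk₀2, ?_⟩
        have := LB k₀ hk₀N hk₀2
        simp only [Nat.mul_zero, Nat.add_zero, pow_zero, one_mul]
        rw [hδdef]; linarith
      | succ j ihj =>
        obtain ⟨hak, hxlb⟩ := ihj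
        set k := k₀ + 2*j with hkdef
        have hkN : N ≤ k := by omega
        set x := T (k+1) with hx
        set D : ℝ := 13^j * δ with hD
        have hDpos : 0 < D := by positivity
        have hxL : 2*u/(1-u) ≤ x := LB k hkN hak
        have hxLs : s - 1 + D ≤ x := hxlb
        have hxhalf : 1/2 < x := by nlinarith [hDpos]
        -- a (k+1) = 1
        have hak1 : a (k+1) = 1 := by
          by_contra hne
          have h2' : 2 ≤ a (k+1) := by have := ha (k+1); omega
          have h2R : (2:ℝ) ≤ (a (k+1) : ℝ) := by exact_mod_cast h2'
          have e := hTmul (k+1)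
          have := hT0 (k+2)
          nlinarith [hT0 (k+1)]
        -- x * (1 + T (k+2)) = 1
        have hxT : x * (1 + T (k+2)) = 1 := by
          have e := hTmul (k+1)
          rw [hak1] at e
          simpa using e
        -- u ≤ T (k+2)
        have huT : u ≤ T (k+2) := by
          have := hP (k+2) (by omega)
          nlinarith [hT0 (k+2), hV1 (k+2), hV0 (k+2)]
        -- x ≤ 1/(1+u)
        have hxub : x * (1 + u) ≤ 1 := by nlinarith [hxhalf]
        -- a (k+2) ≥ 2
        have hak2 : 2 ≤ a (k+2) := by
          by_contra hne
          have h1' : a (k+2) = 1 := by have := ha (k+2); omega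
          have e := hTmul (k+2)
          rw [h1'] at e
          push_cast at e
          -- T(k+2) * (1 + T(k+3)) = 1 with T(k+2) = (1-x)/x small
          have hT2ub : T (k+2) * (2*u) ≤ (1 - 3*u) := by
            -- T(k+2) = 1/x - 1 ≤ (1-L)/L where L = 2u/(1-u)
            have hxpos : (0:ℝ) < x := hT0 (k+1)
            have hL : 2*u/(1-u) ≤ x := hxL
            have hLpos : (0:ℝ) < 2*u/(1-u) := by
              apply div_pos (by linarith) (by linarith)
            -- from x*(1+T(k+2)) = 1 : T(k+2) = (1-x)/x
            have : T (k+2) * x = 1 - x := by nlinarith [hxT]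
            rw [div_le_iff₀ (by linarith : (0:ℝ) < 1-u)] at hL
            nlinarith [hT0 (k+2), hxpos]
          have := hT1 (k+3)
          nlinarith [hT0 (k+3), hu3, hu4]
        -- relation : T(k+2) * ((a (k+2)) + T(k+3)) = 1
        have e3 := hTmul (k+2)
        have hwL : 2*u/(1-u) ≤ T (k+3) := LB (k+2) (by omega) hak2
        -- a (k+2) = 2
        have hak22 : a (k+2) = 2 := by
          by_contra hne
          have h3' : 3 ≤ a (k+2) := by omega
          have h3R : (3:ℝ) ≤ (a (k+2) : ℝ) := by exact_mod_cast h3'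
          -- T(k+2) ≥ u via 1/x ≥ 1+u : T(k+2) = (1-x)/x
          have hxpos : (0:ℝ) < x := hT0 (k+1)
          have hT2x : T (k+2) * x = 1 - x := by nlinarith [hxT]
          have hT2lb : u ≤ T (k+2) := huT
          -- 1 = T(k+2)*(a+w) ≥ u*(3+w) ⇒ w ≤ 1/u - 3
          have hwub : T (k+3) * u ≤ 1 - 3*u := by
            nlinarith [hT0 (k+3), e3]
          rw [div_le_iff₀ (by linarith : (0:ℝ) < 1-u)] at hwL
          nlinarith [hu1, hs3, hu3]
        -- final expansion step
        rw [hak22] at e3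
        push_cast at e3
        set w := T (k+3) with hw
        -- w * (1-x) = 3x - 2
        have hxpos : (0:ℝ) < x := hT0 (k+1)
        have hx1' : x < 1 := hT1 (k+1)
        have hkey : w * (1 - x) = 3*x - 2 := by
          have hT2x : T (k+2) * x = 1 - x := by nlinarith [hxT]
          nlinarith [e3, hxT]
        have hgoal : s - 1 + 13 * D ≤ w := by
          nlinarith [hkey, hxLs, hDpos, hs3, mul_nonneg (le_of_lt hDpos) (by linarith : (0:ℝ) ≤ 1 - x),
            mul_nonneg (by linarith : (0:ℝ) ≤ x - (s-1) - D) (by linarith : (0:ℝ) ≤ 1 - x)]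
        constructor
        · show 2 ≤ a (k₀ + 2*(j+1))
          have : k₀ + 2*(j+1) = k+2 := by omega
          rw [this]; exact hak2
        · show (s-1) + 13^(j+1) * δ ≤ T (k₀ + 2*(j+1) + 1)
          have hidx : k₀ + 2*(j+1) + 1 = k+3 := by omega
          rw [hidx]
          calc (s-1) + 13^(j+1) * δ = (s-1) + 13 * D := by rw [hD]; ring
          _ ≤ w := hgoal
    -- contradiction: 13^j δ bounded
    obtain ⟨j, hj⟩ := pow_unbounded_of_one_lt (1/δ) (by norm_num : (1:ℝ) < 13)
    have h1 := (main j).2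
    have h2' := hT1 (k₀ + 2*j + 1)
    have : 13^j * δ ≤ 2 - s := by nlinarith
    have h13 : (1:ℝ) < 13^j * δ := by
      rw [div_lt_iff₀ hδpos] at hj
      linarith
    linarith
  -- from freq conclude
  have hfreq2 : ∃ᶠ k in atTop, (fun k => 1 + T k * V k) k ≤ 3 - s + ε := by
    apply freq.mono
    intro k hk
    have : ε' ≤ ε := min_le_left _ _
    simp only
    linarith
  have hbdd : IsBoundedUnder (· ≥ ·) atTop (fun k => 1 + T k * V k) := by
    apply isBoundedUnder_of
    refine ⟨1, fun k => ?_⟩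
    nlinarith [hT0 k, hV0 k]
  exact liminf_le_of_frequently_le hfreq2 hbdd

/-- gap in the lower BL spectrum of rotations between 3 − √3 and (5 − √5)/2. -/
theorem stmt13 (a : ℕ → ℕ) (ha : ∀ n, 1 ≤ a n) (hirr : Irrational (cfInf a))
    (hbdd : ∃ M : ℕ, ∀ k, a k ≤ M) :
    Filter.liminf (fun k => 1 + cfT a k * cfV a k) Filter.atTop ≤ 3 - Real.sqrt 3 ∨
    Filter.liminf (fun k => 1 + cfT a k * cfV a k) Filter.atTop = (5 - Real.sqrt 5) / 2 := by
  by_cases h : ∃ N, ∀ k ≥ N, a k = 1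
  · right
    obtain ⟨N, hN⟩ := h
    exact case1 a ha N hN
  · left
    apply case2 a ha
    intro N
    push_neg at h
    obtain ⟨k, hk, hk1⟩ := h N
    exact ⟨k, hk, by have := ha k; omega⟩
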